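/- arXiv:1709.06787 — 7 statements merged into one kernel-verified Lean document; each statement's English description precedes it below -/
import Mathlib

section
/- The Skeel condition number of the (n+1)×(n+1) lower triangular Pascal matrix P_L equals 3^n, i.e., the ∞-norm of |P_L⁻¹|·|P_L| is 3^n. -/
open Finset

/-- Alternating sum of binomial coefficients, real version. -/
lemma alt_sum_choose (m : ℕ) :
    ∑ t ∈ range (m + 1), (-1 : ℝ) ^ t * (m.choose t : ℝ) =
      if m = 0 then 1 else 0 := by
  by_cases h : m = 0
  · subst h; simp
  · have := Int.alternating_sum_range_choose_of_ne h
    rw [if_neg h]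
    exact_mod_cast this

/-- Key orthogonality identity. -/
lemma key_sum (n i j : ℕ) (hi : i ≤ n) :
    ∑ k ∈ range (n + 1), (i.choose k : ℝ) * ((-1) ^ (k + j) * (k.choose j : ℝ)) =
      if i = j then 1 else 0 := by
  -- restrict to range (i+1)
  rw [← Finset.sum_subset (Finset.range_subset_range.2 (Nat.succ_le_succ hi))
      (fun k _ hk => by
        have : i < k := by simpa using hk
        simp [Nat.choose_eq_zero_of_lt this])]
  by_cases hij : j ≤ i
  · -- split off range j
    rw [Finset.range_eq_Ico, ← Finset.sum_Ico_consecutive _ (Nat.zero_le j)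
        (Nat.le_succ_of_le hij)]
    have h1 : ∑ k ∈ Finset.Ico 0 j,
        (i.choose k : ℝ) * ((-1) ^ (k + j) * (k.choose j : ℝ)) = 0 := by
      apply Finset.sum_eq_zero
      intro k hk
      have : k < j := (Finset.mem_Ico.1 hk).2
      simp [Nat.choose_eq_zero_of_lt this]
    rw [h1, zero_add, Finset.sum_Ico_eq_sum_range]
    have hlen : i + 1 - j = (i - j) + 1 := by omega
    rw [hlen]
    have h2 : ∀ t ∈ range ((i - j) + 1),
        (i.choose (j + t) : ℝ) * ((-1) ^ ((j + t) + j) * ((j + t).choose j : ℝ)) =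
          (i.choose j : ℝ) * ((-1) ^ t * ((i - j).choose t : ℝ)) := by
      intro t ht
      have ht' : t ≤ i - j := by simpa [Nat.lt_succ_iff] using ht
      have hle : j + t ≤ i := by omega
      have hcm := Nat.choose_mul (n := i) (Nat.le_add_right j t)
      have hsub : j + t - j = t := by omega
      rw [hsub] at hcm
      have hsign : ((-1 : ℝ)) ^ ((j + t) + j) = (-1) ^ t := by
        have : (j + t) + j = t + 2 * j := by ring
        rw [this, pow_add, pow_mul]
        norm_num
      have hcast : (i.choose (j + t) : ℝ) * ((j + t).choose j : ℝ) =
          (i.choose j : ℝ) * ((i - j).choose t : ℝ) := by exact_mod_cast hcm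
      rw [hsign]
      linear_combination (-1 : ℝ) ^ t * hcast
    rw [Finset.sum_congr rfl h2, ← Finset.mul_sum, alt_sum_choose]
    by_cases h : i = j
    · subst h; simp
    · have : i - j ≠ 0 := by omega
      simp [this, h]
  · -- j > i : all terms vanish
    have h0 : ∀ k ∈ range (i + 1),
        (i.choose k : ℝ) * ((-1) ^ (k + j) * (k.choose j : ℝ)) = 0 := by
      intro k hk
      have hk' : k < j := by
        have : k < i + 1 := by simpa using hk
        omega
      simp [Nat.choose_eq_zero_of_lt hk']
    rw [Finset.sum_eq_zero h0]
    have : i ≠ j := by omega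
    simp [this]

/-- Skeel condition number of the lower triangular Pascal matrix is `3^n`. -/
theorem skeel_cond_pascal (n : ℕ) :
    let P : Matrix (Fin (n + 1)) (Fin (n + 1)) ℝ :=
      fun i j => ((i : ℕ).choose (j : ℕ) : ℝ)
    (⨆ i : Fin (n + 1), ∑ j : Fin (n + 1),
        abs (∑ k : Fin (n + 1), |P⁻¹ i k| * |P k j|)) = 3 ^ n := by
  intro P
  set Q : Matrix (Fin (n + 1)) (Fin (n + 1)) ℝ :=
    fun i j => (-1) ^ ((i : ℕ) + (j : ℕ)) * ((i : ℕ).choose (j : ℕ) : ℝ) with hQ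
  have hPQ : P * Q = 1 := by
    ext i j
    rw [Matrix.mul_apply, Matrix.one_apply]
    have := key_sum n i j (Fin.is_le i)
    rw [← Fin.sum_univ_eq_sum_range
      (fun k => ((i : ℕ).choose k : ℝ) * ((-1) ^ (k + (j : ℕ)) * ((k).choose (j : ℕ) : ℝ)))] at this
    simp only [P, Q]
    rw [this]
    have : i = j ↔ (i : ℕ) = (j : ℕ) := ⟨fun h => by rw [h], Fin.ext⟩
    simp [this]
  have hinv : P⁻¹ = Q := Matrix.inv_eq_right_inv hPQ
  -- absolute values
  have habsQ : ∀ i k : Fin (n + 1), |P⁻¹ i k| = ((i : ℕ).choose (k : ℕ) : ℝ) := by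
    intro i k
    rw [hinv]
    simp only [Q, abs_mul, abs_pow, abs_neg, abs_one, one_pow, one_mul,
      abs_of_nonneg (by positivity : (0:ℝ) ≤ ((i : ℕ).choose (k : ℕ) : ℝ))]
  have habsP : ∀ k j : Fin (n + 1), |P k j| = ((k : ℕ).choose (j : ℕ) : ℝ) := by
    intro k j
    simp only [P, abs_of_nonneg (by positivity : (0:ℝ) ≤ ((k : ℕ).choose (j : ℕ) : ℝ))]
  -- row sums equal 3 ^ i
  have hrow : ∀ i : Fin (n + 1),
      (∑ j : Fin (n + 1), abs (∑ k : Fin (n + 1), |P⁻¹ i k| * |P k j|))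
        = (3 : ℝ) ^ (i : ℕ) := by
    intro i
    have hterm : ∀ j : Fin (n + 1),
        abs (∑ k : Fin (n + 1), |P⁻¹ i k| * |P k j|)
          = ∑ k : Fin (n + 1), ((i : ℕ).choose (k : ℕ) : ℝ) * ((k : ℕ).choose (j : ℕ) : ℝ) := by
      intro j
      simp only [habsQ, habsP]
      exact abs_of_nonneg (Finset.sum_nonneg fun k _ => by positivity)
    rw [Finset.sum_congr rfl (fun j _ => hterm j), Finset.sum_comm]
    have hinner : ∀ k : Fin (n + 1),
        ∑ j : Fin (n + 1), ((i : ℕ).choose (k : ℕ) : ℝ) * ((k : ℕ).choose (j : ℕ) : ℝ)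
          = ((i : ℕ).choose (k : ℕ) : ℝ) * 2 ^ (k : ℕ) := by
      intro k
      rw [← Finset.mul_sum]
      congr 1
      rw [Fin.sum_univ_eq_sum_range (fun j => ((k : ℕ).choose j : ℝ))]
      rw [← Finset.sum_subset (Finset.range_subset_range.2 (Nat.succ_le_succ (Fin.is_le k)))
        (fun j _ hj => by
          have : (k : ℕ) < j := by simpa using hj
          simp [Nat.choose_eq_zero_of_lt this])]
      exact_mod_cast congrArg (Nat.cast : ℕ → ℝ) (Nat.sum_range_choose (k : ℕ))
    rw [Finset.sum_congr rfl (fun k _ => hinner k)]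
    rw [Fin.sum_univ_eq_sum_range (fun k => ((i : ℕ).choose k : ℝ) * 2 ^ k)]
    rw [← Finset.sum_subset (Finset.range_subset_range.2 (Nat.succ_le_succ (Fin.is_le i)))
      (fun k _ hk => by
        have : (i : ℕ) < k := by simpa using hk
        simp [Nat.choose_eq_zero_of_lt this])]
    have h3 : (3 : ℝ) ^ (i : ℕ)
        = ∑ x ∈ range ((i : ℕ) + 1), 2 ^ x * (((i : ℕ)).choose x : ℝ) := by
      have := add_pow (2 : ℝ) 1 (i : ℕ)
      norm_num at this
      simpa using this
    rw [h3]
    exact Finset.sum_congr rfl fun x _ => mul_comm _ _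
  rw [iSup_congr hrow]
  -- sup of 3^i over i ≤ n is 3^n
  apply le_antisymm
  · apply ciSup_le
    intro i
    exact pow_le_pow_right₀ (by norm_num) (Fin.is_le i)
  · have := le_ciSup (f := fun i : Fin (n + 1) => (3 : ℝ) ^ (i : ℕ))
      (Set.Finite.bddAbove (Set.finite_range _)) (Fin.last n)
    simpa using this
end

section
/- For n ≥ 1 and equidistant nodes x_i = a + ℓ·i/n with ℓ = b - a > 0, the inverse of the collocation matrix L of the monic Newton basis has entries (-1)^{i-j}·(n/ℓ)^i / (j!·(i-j)!) for j ≤ i and 0 for j > i. -/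
open Finset

lemma cast_descFactorial_prod (i j : ℕ) :
    ((i.descFactorial j : ℝ)) = ∏ k ∈ Finset.range j, ((i : ℝ) - k) := by
  induction j with
  | zero => simp
  | succ j ih =>
    rw [Finset.prod_range_succ, ← ih, Nat.descFactorial_succ]
    rcases le_or_gt j i with h | h
    · push_cast [Nat.cast_sub h]
      ring
    · have h0 : i.descFactorial j = 0 := Nat.descFactorial_eq_zero_iff_lt.2 h
      simp [h0]

lemma int_key (N i k : ℕ) (hi : i ≤ N) :
    ∑ j ∈ Finset.range (N + 1), (-1 : ℤ) ^ (j - k) * (i.choose j) * (j.choose k)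
      = if i = k then 1 else 0 := by
  have hsub : Finset.Ico k (i + 1) ⊆ Finset.range (N + 1) := by
    intro t ht
    simp only [Finset.mem_Ico] at ht
    exact Finset.mem_range.2 (lt_of_lt_of_le ht.2 (by omega))
  rw [← Finset.sum_subset hsub]
  · rcases le_or_gt k i with hk | hk
    · have : ∀ m ∈ Finset.range (i - k + 1),
          (-1 : ℤ) ^ ((k + m) - k) * (i.choose (k + m)) * ((k + m).choose k)
            = (i.choose k : ℤ) * ((-1 : ℤ) ^ m * ((i - k).choose m)) := by
        intro m hm
        simp only [Finset.mem_range] at hm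
        have hkm : k + m ≤ i := by omega
        have := Nat.choose_mul (n := i) (Nat.le_add_right k m)
        rw [Nat.add_sub_cancel_left] at this ⊢
        rw [mul_assoc, ← Nat.cast_mul, this]
        push_cast
        ring
      rw [show Finset.Ico k (i + 1) = Finset.map (addLeftEmbedding k) (Finset.range (i - k + 1)) by
            ext t
            simp only [Finset.mem_Ico, Finset.mem_map, Finset.mem_range, addLeftEmbedding_apply]
            constructor
            · rintro ⟨h1, h2⟩; exact ⟨t - k, by omega, by omega⟩
            · rintro ⟨m, hm, rfl⟩; omega,
          Finset.sum_map]
      simp only [addLeftEmbedding_apply]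
      rw [Finset.sum_congr rfl this, ← Finset.mul_sum, Int.alternating_sum_range_choose]
      rcases eq_or_lt_of_le hk with rfl | hlt
      · simp
      · have h1 : i - k ≠ 0 := by omega
        have h2 : i ≠ k := by omega
        simp [h1, h2]
    · have : Finset.Ico k (i + 1) = ∅ := by
        rw [Finset.Ico_eq_empty_iff]; omega
      rw [this]
      simp [show i ≠ k by omega]
  · intro t ht hnt
    simp only [Finset.mem_Ico, not_and_or, not_le, not_lt] at hnt
    rcases hnt with h | h
    · simp [Nat.choose_eq_zero_of_lt h]
    · simp [Nat.choose_eq_zero_of_lt (by omega : i < t)]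

lemma real_key (N i k : ℕ) (hi : i ≤ N) :
    ∑ j ∈ Finset.range (N + 1), (i.descFactorial j : ℝ) *
        (if k ≤ j then (-1 : ℝ) ^ (j - k) / (k.factorial * (j - k).factorial) else 0)
      = if i = k then 1 else 0 := by
  have hterm : ∀ j ∈ Finset.range (N + 1),
      (i.descFactorial j : ℝ) *
        (if k ≤ j then (-1 : ℝ) ^ (j - k) / (k.factorial * (j - k).factorial) else 0)
      = (-1 : ℝ) ^ (j - k) * (i.choose j) * (j.choose k) := by
    intro j _
    rcases le_or_gt k j with hk | hk
    · rw [if_pos hk]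
      have h1 : (j.choose k : ℝ) = j.factorial / (k.factorial * (j - k).factorial) := by
        rw [eq_div_iff (by positivity)]
        rw [← Nat.cast_mul, ← Nat.cast_mul, ← mul_assoc, Nat.choose_mul_factorial_mul_factorial hk]
      have h2 : (i.descFactorial j : ℝ) = (i.choose j) * j.factorial := by
        rw [← Nat.cast_mul, Nat.descFactorial_eq_factorial_mul_choose]
        push_cast; ring
      rw [h1, h2]
      ring
    · rw [if_neg (not_le.2 hk), Nat.choose_eq_zero_of_lt hk]
      simp
  rw [Finset.sum_congr rfl hterm]
  have := int_key N i k hi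
  have h2 : ((∑ j ∈ Finset.range (N + 1), (-1 : ℤ) ^ (j - k) * (i.choose j) * (j.choose k) : ℤ) : ℝ)
      = ∑ j ∈ Finset.range (N + 1), (-1 : ℝ) ^ (j - k) * (i.choose j) * (j.choose k) := by
    push_cast; rfl
  rw [← h2, this]
  split <;> simp

/-- Entries of the inverse of the collocation matrix of the monic Newton basis at
equidistant nodes. -/
theorem monic_newton_collocation_inverse_entries (n : ℕ) (hn : 1 ≤ n) (a b ℓ : ℝ)
    (hℓ : ℓ = b - a) (hpos : 0 < ℓ)
    (x : ℕ → ℝ) (hx : ∀ i, x i = a + ℓ * i / n)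
    (L : Matrix (Fin (n + 1)) (Fin (n + 1)) ℝ)
    (hL : ∀ i j : Fin (n + 1), L i j = ∏ k ∈ Finset.range (j : ℕ), (x i - x k)) :
    ∀ i j : Fin (n + 1),
      L⁻¹ i j = if (j : ℕ) ≤ (i : ℕ) then
          (-1 : ℝ) ^ ((i : ℕ) - (j : ℕ)) * (n / ℓ) ^ (i : ℕ) /
            ((j : ℕ).factorial * ((i : ℕ) - (j : ℕ)).factorial)
        else 0 := by
  have hn0 : (n : ℝ) ≠ 0 := Nat.cast_ne_zero.2 (by omega)
  have hl0 : ℓ ≠ 0 := ne_of_gt hpos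
  set M : Matrix (Fin (n + 1)) (Fin (n + 1)) ℝ := fun i j =>
    if (j : ℕ) ≤ (i : ℕ) then
      (-1 : ℝ) ^ ((i : ℕ) - (j : ℕ)) * (n / ℓ) ^ (i : ℕ) /
        ((j : ℕ).factorial * ((i : ℕ) - (j : ℕ)).factorial)
    else 0 with hM
  have hLM : L * M = 1 := by
    ext i k
    rw [Matrix.mul_apply]
    have hterm : ∀ j : Fin (n + 1), L i j * M j k
        = ((i : ℕ).descFactorial (j : ℕ) : ℝ) *
          (if (k : ℕ) ≤ (j : ℕ) then
            (-1 : ℝ) ^ ((j : ℕ) - (k : ℕ)) /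
              ((k : ℕ).factorial * ((j : ℕ) - (k : ℕ)).factorial) else 0) := by
      intro j
      have hLij : L i j = (ℓ / n) ^ (j : ℕ) * ((i : ℕ).descFactorial (j : ℕ) : ℝ) := by
        rw [hL]
        have h1 : ∀ t ∈ Finset.range (j : ℕ), x i - x t = (ℓ / n) * ((i : ℝ) - t) := by
          intro t _
          rw [hx, hx]
          field_simp
          ring
        rw [Finset.prod_congr rfl h1, Finset.prod_mul_distrib, Finset.prod_const,
          Finset.card_range, cast_descFactorial_prod]
      rw [hLij, hM]
      simp only
      split
      · have hcan : (ℓ / (n : ℝ)) ^ (j : ℕ) * ((n : ℝ) / ℓ) ^ (j : ℕ) = 1 := by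
          rw [← mul_pow]
          field_simp
          exact one_pow _
        calc (ℓ / (n : ℝ)) ^ (j : ℕ) * ((i : ℕ).descFactorial (j : ℕ) : ℝ) *
              ((-1 : ℝ) ^ ((j : ℕ) - (k : ℕ)) * ((n : ℝ) / ℓ) ^ (j : ℕ) /
                (((k : ℕ).factorial : ℝ) * (((j : ℕ) - (k : ℕ)).factorial : ℝ)))
            = ((ℓ / (n : ℝ)) ^ (j : ℕ) * ((n : ℝ) / ℓ) ^ (j : ℕ)) *
              (((i : ℕ).descFactorial (j : ℕ) : ℝ) * ((-1 : ℝ) ^ ((j : ℕ) - (k : ℕ)) /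
                (((k : ℕ).factorial : ℝ) * (((j : ℕ) - (k : ℕ)).factorial : ℝ)))) := by ring
          _ = _ := by rw [hcan, one_mul]
      · ring
    rw [Finset.sum_congr rfl (fun j _ => hterm j)]
    rw [Fin.sum_univ_eq_sum_range (fun j => ((i : ℕ).descFactorial j : ℝ) *
          (if (k : ℕ) ≤ j then
            (-1 : ℝ) ^ (j - (k : ℕ)) /
              ((k : ℕ).factorial * (j - (k : ℕ)).factorial) else 0))]
    rw [real_key n (i : ℕ) (k : ℕ) (by omega)]
    rw [Matrix.one_apply]
    congr 1
    simp [Fin.ext_iff]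
  have hinv := Matrix.inv_eq_right_inv hLM
  intro i j
  rw [hinv, hM]
end

section
/- If ℓ > 1, then the limit as n → ∞ of Γ(n+1, n/ℓ)/Γ(n+1) equals 1. -/
open Real Filter MeasureTheory Set

/-- The upper incomplete gamma function `Γ(a, x) = ∫_x^∞ t^(a-1) e^(-t) dt`. -/
noncomputable def upperGamma (a x : ℝ) : ℝ :=
  ∫ t in Set.Ioi x, t ^ (a - 1) * Real.exp (-t)

theorem upperGamma_ratio_tendsto_one (ℓ : ℝ) (hℓ : 1 < ℓ) :
    Tendsto (fun n : ℕ => upperGamma (n + 1) (n / ℓ) / Real.Gamma (n + 1))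
      atTop (nhds 1) := by
  have hℓ0 : (0:ℝ) < ℓ := lt_trans one_pos hℓ
  have ha : ∀ n : ℕ, (0:ℝ) < (n:ℝ) + 1 := fun n => by positivity
  have hx : ∀ n : ℕ, (0:ℝ) ≤ (n:ℝ) / ℓ := fun n => by positivity
  have hGpos : ∀ n : ℕ, 0 < Real.Gamma ((n:ℝ) + 1) :=
    fun n => Real.Gamma_pos_of_pos (ha n)
  set q : ℕ → ℝ := fun n =>
    (∫ t in Ioc 0 ((n:ℝ)/ℓ), t ^ ((n:ℝ) + 1 - 1) * Real.exp (-t)) /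
      Real.Gamma ((n:ℝ) + 1) with hqdef
  -- integrability of the Gamma integrand
  have hint : ∀ n : ℕ, IntegrableOn
      (fun t : ℝ => t ^ ((n:ℝ) + 1 - 1) * Real.exp (-t)) (Ioi 0) := by
    intro n
    exact (Real.GammaIntegral_convergent (ha n)).congr_fun
      (fun t _ => mul_comm _ _) measurableSet_Ioi
  -- splitting the Gamma integral
  have hsplit : ∀ n : ℕ, Real.Gamma ((n:ℝ) + 1) =
      (∫ t in Ioc 0 ((n:ℝ)/ℓ), t ^ ((n:ℝ) + 1 - 1) * Real.exp (-t)) +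
        upperGamma ((n:ℝ) + 1) ((n:ℝ)/ℓ) := by
    intro n
    rw [Real.Gamma_eq_integral (ha n), upperGamma,
      ← setIntegral_union (Ioc_disjoint_Ioi le_rfl) measurableSet_Ioi
        ((hint n).mono_set Ioc_subset_Ioi_self)
        ((hint n).mono_set (Ioi_subset_Ioi (hx n))),
      Ioc_union_Ioi_eq_Ioi (hx n)]
    exact setIntegral_congr_fun measurableSet_Ioi fun t ht => mul_comm _ _
  -- nonnegativity of q
  have hq0 : ∀ n : ℕ, 0 ≤ q n := by
    intro n
    apply div_nonneg _ (hGpos n).le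
    apply setIntegral_nonneg measurableSet_Ioc
    intro t ht
    exact le_of_lt (mul_pos (rpow_pos_of_pos ht.1 _) (exp_pos _))
  -- upper bound for q
  have hqB : ∀ n : ℕ, q n ≤
      Real.exp ((ℓ - 1) * ((n:ℝ)/ℓ)) * (1/ℓ) ^ ((n:ℝ) + 1) := by
    intro n
    set x : ℝ := (n:ℝ)/ℓ with hxdef
    set c : ℝ := Real.exp ((ℓ - 1) * x) with hcdef
    have hc0 : 0 < c := exp_pos _
    set g : ℝ → ℝ := fun t => t ^ ((n:ℝ) + 1 - 1) * Real.exp (-(ℓ * t)) with hgdef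
    have hg_int : IntegrableOn g (Ioi 0) := by
      refine Integrable.mono' (hint n) ?_ ?_
      · apply AEMeasurable.aestronglyMeasurable
        fun_prop
      · filter_upwards [ae_restrict_mem measurableSet_Ioi] with t ht
        rw [Real.norm_eq_abs, abs_of_nonneg
          (mul_nonneg (rpow_nonneg (le_of_lt ht) _) (exp_pos _).le)]
        apply mul_le_mul_of_nonneg_left _ (rpow_nonneg (le_of_lt ht) _)
        apply Real.exp_le_exp.2
        nlinarith [le_of_lt (mem_Ioi.mp ht)]
    have hpt : ∀ t ∈ Ioc (0:ℝ) x,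
        t ^ ((n:ℝ) + 1 - 1) * Real.exp (-t) ≤ c * g t := by
      intro t ht
      have h1 : Real.exp (-t) = Real.exp ((ℓ - 1) * t) * Real.exp (-(ℓ * t)) := by
        rw [← Real.exp_add]; ring_nf
      have h2 : Real.exp ((ℓ - 1) * t) ≤ c := by
        apply Real.exp_le_exp.2
        apply mul_le_mul_of_nonneg_left ht.2 (by linarith)
      calc t ^ ((n:ℝ) + 1 - 1) * Real.exp (-t)
          = Real.exp ((ℓ - 1) * t) * (t ^ ((n:ℝ) + 1 - 1) * Real.exp (-(ℓ * t))) := by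
            rw [h1]; ring
        _ ≤ c * (t ^ ((n:ℝ) + 1 - 1) * Real.exp (-(ℓ * t))) := by
            apply mul_le_mul_of_nonneg_right h2
            exact mul_nonneg (rpow_nonneg ht.1.le _) (exp_pos _).le
        _ = c * g t := rfl
    have hI1 : (∫ t in Ioc 0 x, t ^ ((n:ℝ) + 1 - 1) * Real.exp (-t))
        ≤ ∫ t in Ioc 0 x, c * g t := by
      apply setIntegral_mono_on ((hint n).mono_set Ioc_subset_Ioi_self)
        ((hg_int.mono_set Ioc_subset_Ioi_self).const_mul c) measurableSet_Ioc hpt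
    have hI2 : (∫ t in Ioc 0 x, c * g t) ≤ ∫ t in Ioi 0, c * g t := by
      apply setIntegral_mono_set (hg_int.const_mul c)
      · filter_upwards [ae_restrict_mem measurableSet_Ioi] with t ht
        exact mul_nonneg hc0.le
          (mul_nonneg (rpow_nonneg (le_of_lt ht) _) (exp_pos _).le)
      · exact HasSubset.Subset.eventuallyLE Ioc_subset_Ioi_self
    have hI3 : (∫ t in Ioi 0, c * g t)
        = c * ((1/ℓ) ^ ((n:ℝ) + 1) * Real.Gamma ((n:ℝ) + 1)) := by
      rw [integral_const_mul, Real.integral_rpow_mul_exp_neg_mul_Ioi (ha n) hℓ0]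
    rw [hqdef]
    rw [div_le_iff₀ (hGpos n)]
    calc (∫ t in Ioc 0 x, t ^ ((n:ℝ) + 1 - 1) * Real.exp (-t))
        ≤ c * ((1/ℓ) ^ ((n:ℝ) + 1) * Real.Gamma ((n:ℝ) + 1)) := by
          rw [← hI3]; exact le_trans hI1 hI2
      _ = c * (1/ℓ) ^ ((n:ℝ) + 1) * Real.Gamma ((n:ℝ) + 1) := by ring
  -- the bound tends to 0
  set r : ℝ := Real.exp ((ℓ - 1)/ℓ) / ℓ with hrdef
  have hr0 : 0 ≤ r := div_nonneg (exp_pos _).le hℓ0.le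
  have hr1 : r < 1 := by
    rw [hrdef, div_lt_one hℓ0]
    have hlog : Real.log (1/ℓ) < 1/ℓ - 1 :=
      Real.log_lt_sub_one_of_pos (by positivity) (by
        intro h
        rw [div_eq_one_iff_eq hℓ0.ne'] at h
        linarith)
    rw [Real.log_div one_ne_zero hℓ0.ne', Real.log_one] at hlog
    have : (ℓ - 1)/ℓ < Real.log ℓ := by
      have h2 : 1 - 1/ℓ < Real.log ℓ := by linarith
      have : (ℓ - 1)/ℓ = 1 - 1/ℓ := by field_simp
      linarith
    calc Real.exp ((ℓ - 1)/ℓ) < Real.exp (Real.log ℓ) := Real.exp_lt_exp.2 this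
      _ = ℓ := Real.exp_log hℓ0
  have hB_eq : ∀ n : ℕ,
      Real.exp ((ℓ - 1) * ((n:ℝ)/ℓ)) * (1/ℓ) ^ ((n:ℝ) + 1) = r ^ n * (1/ℓ) := by
    intro n
    have h1 : (ℓ - 1) * ((n:ℝ)/ℓ) = (n:ℝ) * ((ℓ - 1)/ℓ) := by ring
    have h2 : ((1:ℝ)/ℓ) ^ ((n:ℝ) + 1) = (1/ℓ) ^ n * (1/ℓ) := by
      have : ((n:ℝ) + 1) = ((n + 1 : ℕ) : ℝ) := by push_cast; ring
      rw [this, Real.rpow_natCast, pow_succ]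
    rw [h1, Real.exp_nat_mul, h2, hrdef]
    ring
  have hBtendsto : Tendsto (fun n : ℕ =>
      Real.exp ((ℓ - 1) * ((n:ℝ)/ℓ)) * (1/ℓ) ^ ((n:ℝ) + 1)) atTop (nhds 0) := by
    simp_rw [hB_eq]
    have := (tendsto_pow_atTop_nhds_zero_of_lt_one hr0 hr1).mul_const (1/ℓ)
    rwa [zero_mul] at this
  have hqtendsto : Tendsto q atTop (nhds 0) :=
    squeeze_zero hq0 hqB hBtendsto
  -- conclude
  have heq : (fun n : ℕ => upperGamma ((n:ℝ) + 1) ((n:ℝ)/ℓ) / Real.Gamma ((n:ℝ) + 1))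
      = fun n => 1 - q n := by
    funext n
    have h := hsplit n
    have hG := (hGpos n).ne'
    show upperGamma ((n:ℝ) + 1) ((n:ℝ)/ℓ) / Real.Gamma ((n:ℝ) + 1)
        = 1 - (∫ t in Ioc 0 ((n:ℝ)/ℓ), t ^ ((n:ℝ) + 1 - 1) * Real.exp (-t)) /
            Real.Gamma ((n:ℝ) + 1)
    rw [eq_sub_iff_add_eq, ← add_div, add_comm, ← h, div_self hG]
  rw [heq]
  simpa using tendsto_const_nhds.sub hqtendsto
end

section
/- For n ≥ 1, equidistant nodes x_i = a + ℓ·i/n with ℓ > 0, the ∞-norm of the collocation matrix L of the monic Newton basis equals n!·(ℓ/n)^n·∑_{k=0}^n (1/k!)·(n/ℓ)^k. -/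
/-- The `∞`-norm of the monic Newton collocation matrix at equidistant nodes. -/
theorem monic_newton_collocation_norm (n : ℕ) (hn : 1 ≤ n) (a ℓ : ℝ) (hpos : 0 < ℓ)
    (x : ℕ → ℝ) (hx : ∀ i, x i = a + ℓ * i / n)
    (L : Matrix (Fin (n + 1)) (Fin (n + 1)) ℝ)
    (hL : ∀ i j : Fin (n + 1), L i j = ∏ k ∈ Finset.range (j : ℕ), (x i - x k)) :
    (⨆ i : Fin (n + 1), ∑ j : Fin (n + 1), |L i j|)
      = (n.factorial : ℝ) * (ℓ / n) ^ n *
          ∑ k ∈ Finset.range (n + 1), (1 / (k.factorial : ℝ)) * (n / ℓ) ^ k := by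
  have hn0 : (0:ℝ) < (n:ℝ) := by exact_mod_cast Nat.pos_of_ne_zero (by omega)
  set c : ℝ := ℓ / n with hc
  have hcpos : 0 < c := div_pos hpos hn0
  -- product formula
  have hLij : ∀ i j : Fin (n + 1), L i j = ∏ k ∈ Finset.range (j : ℕ), (c * ((i:ℝ) - k)) := by
    intro i j
    rw [hL]
    refine Finset.prod_congr rfl fun k _ => ?_
    rw [hx, hx, hc]
    field_simp
    ring
  -- last row entries
  have hlast : ∀ j : Fin (n + 1),
      L (Fin.last n) j = ∏ k ∈ Finset.range (j : ℕ), (c * ((n:ℝ) - k)) := by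
    intro j
    rw [hLij]
    simp [Fin.val_last]
  have hlast_nonneg : ∀ j : Fin (n + 1), 0 ≤ L (Fin.last n) j := by
    intro j
    rw [hlast]
    refine Finset.prod_nonneg fun k hk => ?_
    have hk' : k ≤ n := by
      have h1 := Finset.mem_range.mp hk
      have h2 := Fin.is_le j
      omega
    have : (k:ℝ) ≤ n := by exact_mod_cast hk'
    nlinarith
  -- each entry dominated by last row entry
  have hbound : ∀ i j : Fin (n + 1), |L i j| ≤ L (Fin.last n) j := by
    intro i j
    by_cases hij : (j:ℕ) ≤ (i:ℕ)
    · have hnonneg : 0 ≤ L i j := by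
        rw [hLij]
        refine Finset.prod_nonneg fun k hk => ?_
        have : (k:ℝ) ≤ i := by
          exact_mod_cast le_of_lt (lt_of_lt_of_le (Finset.mem_range.mp hk) hij)
        nlinarith
      rw [abs_of_nonneg hnonneg, hLij, hlast]
      refine Finset.prod_le_prod ?_ ?_
      · intro k hk
        have : (k:ℝ) ≤ i := by
          exact_mod_cast le_of_lt (lt_of_lt_of_le (Finset.mem_range.mp hk) hij)
        nlinarith
      · intro k hk
        have hin : (i:ℝ) ≤ n := by exact_mod_cast Fin.is_le i
        nlinarith
    · have hzero : L i j = 0 := by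
        rw [hL]
        refine Finset.prod_eq_zero (Finset.mem_range.mpr (by omega : (i:ℕ) < (j:ℕ))) ?_
        simp
      rw [hzero, abs_zero]
      exact hlast_nonneg j
  -- the sup equals the last row sum
  have hsup : (⨆ i : Fin (n + 1), ∑ j : Fin (n + 1), |L i j|)
      = ∑ j : Fin (n + 1), |L (Fin.last n) j| := by
    refine le_antisymm (ciSup_le fun i => ?_) (le_ciSup (f := fun i : Fin (n+1) => ∑ j : Fin (n + 1), |L i j|) (Set.Finite.bddAbove
      (Set.finite_range _)) (Fin.last n))
    refine Finset.sum_le_sum fun j _ => ?_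
    rw [abs_of_nonneg (hlast_nonneg j)]
    exact hbound i j
  rw [hsup]
  -- last row entry closed form
  have hentry : ∀ j : Fin (n + 1),
      |L (Fin.last n) j| = c ^ (j:ℕ) * (n.descFactorial (j:ℕ) : ℝ) := by
    intro j
    rw [abs_of_nonneg (hlast_nonneg j), hlast, Finset.prod_mul_distrib,
      Finset.prod_const, Finset.card_range]
    congr 1
    rw [Nat.descFactorial_eq_prod_range, Nat.cast_prod]
    refine Finset.prod_congr rfl fun k hk => ?_
    have hk' : k ≤ n := by
      have := Finset.mem_range.mp hk
      have := Fin.is_le j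
      omega
    rw [Nat.cast_sub hk']
  have hrow : (∑ j : Fin (n + 1), |L (Fin.last n) j|)
      = ∑ j ∈ Finset.range (n + 1), c ^ j * (n.descFactorial j : ℝ) := by
    simp_rw [hentry]
    exact Fin.sum_univ_eq_sum_range (fun j => c ^ j * (n.descFactorial j : ℝ)) (n + 1)
  rw [hrow, ← Finset.sum_range_reflect (fun j => c ^ j * (n.descFactorial j : ℝ)) (n + 1),
    Finset.mul_sum]
  refine Finset.sum_congr rfl fun k hk => ?_
  have hk' : k ≤ n := Nat.lt_succ_iff.mp (Finset.mem_range.mp hk)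
  simp only [Nat.add_sub_cancel]  -- n + 1 - 1 - k = n - k ?
  have hdesc : (k.factorial : ℝ) * (n.descFactorial (n - k) : ℝ) = (n.factorial : ℝ) := by
    have := Nat.factorial_mul_descFactorial (Nat.sub_le n k)
    rw [Nat.sub_sub_self hk'] at this
    exact_mod_cast this
  have hpow : c ^ (n - k) * c ^ k = c ^ n := by
    rw [← pow_add]
    congr 1
    omega
  have hkfac : (k.factorial : ℝ) ≠ 0 := by exact_mod_cast k.factorial_ne_zero
  have hcne : c ≠ 0 := ne_of_gt hcpos
  have hnl : (n:ℝ) / ℓ = c⁻¹ := by rw [hc, inv_div]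
  rw [hnl, ← hdesc, ← hpow]
  field_simp
  ring_nf
  rw [← mul_pow, mul_inv_cancel₀ hcne, one_pow]
end

section
/- For n ≥ 1 and equidistant nodes with interval length ℓ satisfying 0 < ℓ ≤ 2, the ∞-norm condition number of the monic Newton collocation matrix L equals 2^n·∑_{k=0}^n (1/k!)·(n/ℓ)^k, and in particular for ℓ = 2 it is at most (2√e)^n. -/
open Finset

lemma prod_cast_dF (i j : ℕ) : ∏ k ∈ range j, ((i:ℝ) - k) = (i.descFactorial j : ℝ) := by
  induction j with
  | zero => simp
  | succ j ih =>
    rw [prod_range_succ, ih, Nat.descFactorial_succ]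
    rcases le_or_gt j i with hji | hij
    · push_cast [Nat.cast_sub hji]; ring
    · rw [Nat.descFactorial_eq_zero_iff_lt.2 hij]
      simp

lemma alt_sum (i m N : ℕ) (hiN : i ≤ N) :
    ∑ j ∈ range (N+1), ((-1:ℝ))^(j-m) * (i.choose j) * (j.choose m)
      = if i = m then 1 else 0 := by
  rcases le_or_gt m i with hmi | hmi
  swap
  · rw [if_neg (by omega)]
    apply Finset.sum_eq_zero
    intro j _
    rcases le_or_gt j i with hji | hij
    · rw [Nat.choose_eq_zero_of_lt (by omega : j < m)]; simp
    · rw [Nat.choose_eq_zero_of_lt hij]; simp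
  have hsub : Finset.Icc m i ⊆ range (N+1) := by
    intro j hj; simp only [Finset.mem_Icc, Finset.mem_range] at *; omega
  rw [← Finset.sum_subset hsub ?_]
  · have hIcc : Finset.Icc m i = Finset.Ico m (i+1) := by
      rw [Finset.Ico_add_one_right_eq_Icc]
    rw [hIcc, Finset.sum_Ico_eq_sum_range]
    have key : ∀ t ∈ range (i + 1 - m), ((-1:ℝ))^((m+t)-m) * (i.choose (m+t)) * ((m+t).choose m)
        = (i.choose m : ℝ) * ((-1:ℝ)^t * ((i-m).choose t)) := by
      intro t ht
      simp only [Finset.mem_range] at ht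
      have h1 : m + t ≤ i := by omega
      have h2n := Nat.choose_mul (n := i) (Nat.le_add_right m t)
      rw [Nat.add_sub_cancel_left] at h2n
      have h2 : (i.choose (m+t) : ℝ) * ((m+t).choose m) = (i.choose m) * ((i-m).choose t) := by
        exact_mod_cast congrArg (Nat.cast : ℕ → ℝ) h2n
      rw [Nat.add_sub_cancel_left, mul_assoc, h2]
      ring
    rw [Finset.sum_congr rfl key, ← Finset.mul_sum]
    have hrange : i + 1 - m = (i - m) + 1 := by omega
    rw [hrange]
    have hiv : ∑ t ∈ range (i-m+1), ((-1:ℝ)^t * ((i-m).choose t))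
        = if i - m = 0 then 1 else 0 := by
      have h := @Int.alternating_sum_range_choose (i-m)
      exact_mod_cast congrArg (Int.cast : ℤ → ℝ) h
    rw [hiv]
    rcases eq_or_ne i m with h | h
    · simp [h]
    · have h0 : i - m ≠ 0 := by omega
      simp [h0, h]
  · intro j hj hnot
    simp only [Finset.mem_Icc, not_and_or, not_le] at hnot
    rcases hnot with h | h
    · rw [Nat.choose_eq_zero_of_lt h]; simp
    · rw [Nat.choose_eq_zero_of_lt h]; simp

lemma pow_div_fact_mono (c : ℝ) (n i : ℕ) (hi : i ≤ n) (hc : (n:ℝ) ≤ c) :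
    c^i / i.factorial ≤ c^n / n.factorial := by
  have hc0 : (0:ℝ) ≤ c := le_trans (Nat.cast_nonneg n) hc
  rw [div_le_div_iff₀ (by positivity) (by positivity)]
  have hfm := Nat.factorial_mul_descFactorial (Nat.sub_le n i)
  rw [Nat.sub_sub_self hi] at hfm
  have hfact : (n.factorial : ℝ) = (i.factorial : ℝ) * (n.descFactorial (n-i) : ℝ) := by
    exact_mod_cast congrArg (Nat.cast : ℕ → ℝ) hfm.symm
  have hdF : ((n.descFactorial (n-i)) : ℝ) ≤ (n:ℝ)^(n-i) := by
    exact_mod_cast Nat.descFactorial_le_pow n (n-i)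
  calc c^i * n.factorial = c^i * (n.descFactorial (n-i) : ℝ) * i.factorial := by
        rw [hfact]; ring
    _ ≤ c^i * (n:ℝ)^(n-i) * i.factorial := by
        apply mul_le_mul_of_nonneg_right _ (by positivity)
        exact mul_le_mul_of_nonneg_left hdF (by positivity)
    _ ≤ c^i * c^(n-i) * i.factorial := by
        apply mul_le_mul_of_nonneg_right _ (by positivity)
        exact mul_le_mul_of_nonneg_left (pow_le_pow_left₀ (by positivity) hc _) (by positivity)
    _ = c^n * i.factorial := by rw [← pow_add, Nat.add_sub_cancel' hi]

lemma ciSup_eq_last {n : ℕ} (f : Fin (n+1) → ℝ) (hf : ∀ i, f i ≤ f (Fin.last n)) :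
    (⨆ i, f i) = f (Fin.last n) :=
  le_antisymm (ciSup_le hf) (le_ciSup (Set.Finite.bddAbove (Set.finite_range f)) _)

/-- For interval length `0 < ℓ ≤ 2`, the `∞`-norm condition number of the monic Newton
collocation matrix is `2^n ∑_{k=0}^n (n/ℓ)^k / k!`; for `ℓ = 2` it is at most `(2√e)^n`. -/
theorem kappa_inf_monic_newton (n : ℕ) (hn : 1 ≤ n) (a ℓ : ℝ) (hpos : 0 < ℓ) (hℓ : ℓ ≤ 2)
    (x : ℕ → ℝ) (hx : ∀ i, x i = a + ℓ * i / n)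
    (L : Matrix (Fin (n + 1)) (Fin (n + 1)) ℝ)
    (hL : ∀ i j : Fin (n + 1), L i j = ∏ k ∈ Finset.range (j : ℕ), (x i - x k)) :
    (⨆ i : Fin (n + 1), ∑ j : Fin (n + 1), |L i j|) *
        (⨆ i : Fin (n + 1), ∑ j : Fin (n + 1), |L⁻¹ i j|)
      = 2 ^ n * ∑ k ∈ Finset.range (n + 1), (1 / (k.factorial : ℝ)) * (n / ℓ) ^ k ∧
    (ℓ = 2 →
      (⨆ i : Fin (n + 1), ∑ j : Fin (n + 1), |L i j|) *
          (⨆ i : Fin (n + 1), ∑ j : Fin (n + 1), |L⁻¹ i j|)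
        ≤ (2 * Real.sqrt (Real.exp 1)) ^ n) := by
  have hn0 : (0:ℝ) < n := by exact_mod_cast hn
  set h : ℝ := ℓ / n with hdef
  have hh : 0 < h := div_pos hpos hn0
  clear_value h
  have hLv : ∀ i j : Fin (n+1), L i j = h^(j:ℕ) * (((i:ℕ).descFactorial (j:ℕ) : ℕ) : ℝ) := by
    intro i j
    rw [hL]
    have hfac : ∀ k ∈ range (j:ℕ), x i - x k = h * (((i:ℕ):ℝ) - (k:ℝ)) := by
      intro k _
      rw [hx, hx, hdef]
      field_simp
      ring
    rw [Finset.prod_congr rfl hfac, Finset.prod_mul_distrib, Finset.prod_const, card_range,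
      prod_cast_dF]
  set M : Matrix (Fin (n+1)) (Fin (n+1)) ℝ := fun i j =>
    if (j:ℕ) ≤ (i:ℕ) then
      ((-1:ℝ))^((i:ℕ)-(j:ℕ)) / (h^(i:ℕ) * ((j:ℕ).factorial) * (((i:ℕ)-(j:ℕ)).factorial))
    else 0 with hMdef
  have hLM : L * M = 1 := by
    ext i m
    rw [Matrix.mul_apply, Matrix.one_apply]
    have hterm : ∀ j : Fin (n+1), L i j * M j m
        = ((-1:ℝ))^((j:ℕ)-(m:ℕ)) * ((i:ℕ).choose (j:ℕ)) * ((j:ℕ).choose (m:ℕ)) := by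
      intro j
      rw [hLv]
      by_cases hmj : (m:ℕ) ≤ (j:ℕ)
      · simp only [hMdef, if_pos hmj]
        have hdf : (((i:ℕ).descFactorial (j:ℕ)) : ℝ)
            = ((j:ℕ).factorial : ℝ) * ((i:ℕ).choose (j:ℕ)) := by
          exact_mod_cast congrArg (Nat.cast : ℕ → ℝ)
            (Nat.descFactorial_eq_factorial_mul_choose (i:ℕ) (j:ℕ))
        have hch : (((j:ℕ).choose (m:ℕ)) : ℝ) * ((m:ℕ).factorial) * (((j:ℕ)-(m:ℕ)).factorial)
            = ((j:ℕ).factorial : ℝ) := by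
          exact_mod_cast congrArg (Nat.cast : ℕ → ℝ) (Nat.choose_mul_factorial_mul_factorial hmj)
        rw [hdf]
        have h1 : (h:ℝ)^(j:ℕ) ≠ 0 := by positivity
        have h2 : ((m:ℕ).factorial : ℝ) ≠ 0 := by positivity
        have h3 : ((((j:ℕ)-(m:ℕ)).factorial) : ℝ) ≠ 0 := by positivity
        field_simp
        rw [← hch]
        ring
      · push_neg at hmj
        simp only [hMdef, if_neg (by omega : ¬ ((m:ℕ) ≤ (j:ℕ)))]
        rw [Nat.choose_eq_zero_of_lt hmj]
        simp
    rw [Finset.sum_congr rfl (fun j _ => hterm j)]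
    rw [Fin.sum_univ_eq_sum_range
      (fun jj => ((-1:ℝ))^(jj-(m:ℕ)) * ((i:ℕ).choose jj) * (jj.choose (m:ℕ))) (n+1)]
    rw [alt_sum (i:ℕ) (m:ℕ) n (Fin.is_le i)]
    simp [Fin.val_eq_val]
  -- continuing inside the example (pasted over the `trivial`)
  have hInv : L⁻¹ = M := Matrix.inv_eq_right_inv hLM
  -- row sums of L
  have hrowL : ∀ i : Fin (n+1), ∑ j : Fin (n+1), |L i j|
      = ∑ j ∈ range (n+1), h^j * (((i:ℕ).descFactorial j : ℕ) : ℝ) := by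
    intro i
    rw [← Fin.sum_univ_eq_sum_range (fun j => h^j * (((i:ℕ).descFactorial j : ℕ) : ℝ)) (n+1)]
    apply Finset.sum_congr rfl
    intro j _
    rw [hLv, abs_of_nonneg (by positivity)]
  -- row sums of M
  have hrowM : ∀ i : Fin (n+1), ∑ m : Fin (n+1), |M i m|
      = 2^(i:ℕ) / (h^(i:ℕ) * ((i:ℕ).factorial : ℝ)) := by
    intro i
    have habs : ∀ m : Fin (n+1), |M i m|
        = (fun mm : ℕ => if mm ≤ (i:ℕ) then
            (h^(i:ℕ) * (mm.factorial : ℝ) * (((i:ℕ)-mm).factorial : ℝ))⁻¹ else 0) (m:ℕ) := by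
      intro m
      by_cases hmi : (m:ℕ) ≤ (i:ℕ)
      · simp only [hMdef, if_pos hmi]
        rw [abs_div, abs_pow, abs_neg, abs_one, one_pow,
          abs_of_pos (by positivity), one_div]
      · simp only [hMdef, if_neg hmi, abs_zero]
    rw [Finset.sum_congr rfl (fun m _ => habs m),
      Fin.sum_univ_eq_sum_range (fun mm : ℕ => if mm ≤ (i:ℕ) then
        (h^(i:ℕ) * (mm.factorial : ℝ) * (((i:ℕ)-mm).factorial : ℝ))⁻¹ else 0) (n+1)]
    rw [← Finset.sum_subset (Finset.range_subset_range.2 (by omega : (i:ℕ)+1 ≤ n+1)) ?_]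
    · have hstep : ∀ m ∈ range ((i:ℕ)+1),
          (if m ≤ (i:ℕ) then (h^(i:ℕ) * (m.factorial : ℝ) * (((i:ℕ)-m).factorial : ℝ))⁻¹ else 0)
          = ((i:ℕ).choose m : ℝ) / (h^(i:ℕ) * ((i:ℕ).factorial : ℝ)) := by
        intro m hm
        simp only [Finset.mem_range] at hm
        have hmi : m ≤ (i:ℕ) := by omega
        rw [if_pos hmi]
        have hch : (((i:ℕ).choose m) : ℝ) * (m.factorial) * (((i:ℕ)-m).factorial)
            = ((i:ℕ).factorial : ℝ) := by
          exact_mod_cast congrArg (Nat.cast : ℕ → ℝ) (Nat.choose_mul_factorial_mul_factorial hmi)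
        have h1 : (h:ℝ)^(i:ℕ) ≠ 0 := by positivity
        have h2 : ((m.factorial) : ℝ) ≠ 0 := by positivity
        have h3 : ((((i:ℕ)-m).factorial) : ℝ) ≠ 0 := by positivity
        field_simp
        rw [← hch]
        ring
      rw [Finset.sum_congr rfl hstep, ← Finset.sum_div, ← Nat.cast_sum, Nat.sum_range_choose]
      push_cast
      ring
    · intro m hm hnot
      simp only [Finset.mem_range] at hm hnot
      rw [if_neg (by omega)]
  -- suprema
  set A : ℝ := ∑ j ∈ range (n+1), h^j * ((n.descFactorial j : ℕ) : ℝ) with hAdef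
  have hsupL : (⨆ i : Fin (n+1), ∑ j : Fin (n+1), |L i j|) = A := by
    have hlast : (∑ j : Fin (n+1), |L (Fin.last n) j|) = A := by
      rw [hrowL]; simp [Fin.val_last, hAdef]
    rw [← hlast]
    apply ciSup_eq_last
    intro i
    rw [hrowL, hrowL]
    apply Finset.sum_le_sum
    intro j _
    have hd : ((i:ℕ).descFactorial j : ℝ) ≤ ((((Fin.last n : Fin (n+1)):ℕ)).descFactorial j : ℝ) := by
      rw [Fin.val_last]
      exact_mod_cast Nat.descFactorial_le j (Fin.is_le i)
    exact mul_le_mul_of_nonneg_left hd (by positivity)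
  set B : ℝ := 2^n / (h^n * (n.factorial : ℝ)) with hBdef
  have hsupM : (⨆ i : Fin (n+1), ∑ j : Fin (n+1), |L⁻¹ i j|) = B := by
    simp_rw [hInv]
    have hlast : (∑ m : Fin (n+1), |M (Fin.last n) m|) = B := by
      rw [hrowM]; simp [Fin.val_last, hBdef]
    rw [← hlast]
    apply ciSup_eq_last
    intro i
    rw [hrowM, hrowM]
    have hc : (n:ℝ) ≤ 2/h := by
      rw [le_div_iff₀ hh, hdef]
      field_simp
      linarith [mul_le_mul_of_nonneg_left hℓ (le_of_lt hn0)]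
    have hmono := pow_div_fact_mono (2/h) n (i:ℕ) (Fin.is_le i) hc
    rw [div_pow, div_pow, div_div, div_div] at hmono
    simpa [Fin.val_last] using hmono
  have hprod : A * B = 2^n * ∑ k ∈ range (n+1), (1/(k.factorial:ℝ)) * ((n:ℝ)/ℓ)^k := by
    rw [← Finset.sum_range_reflect (fun k => (1/(k.factorial:ℝ)) * ((n:ℝ)/ℓ)^k) (n+1)]
    rw [hAdef, Finset.sum_mul, Finset.mul_sum]
    apply Finset.sum_congr rfl
    intro j hj
    simp only [Finset.mem_range] at hj
    have hjn : j ≤ n := by omega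
    have hidx : n + 1 - 1 - j = n - j := by omega
    have hfmn := Nat.factorial_mul_descFactorial hjn
    have hfm : ((n-j).factorial : ℝ) * ((n.descFactorial j : ℕ) : ℝ) = (n.factorial : ℝ) := by
      exact_mod_cast congrArg (Nat.cast : ℕ → ℝ) hfmn
    have hdne : ((n.descFactorial j : ℕ) : ℝ) ≠ 0 := by
      intro h0
      rw [h0, mul_zero] at hfm
      exact (by positivity : ((n.factorial:ℕ):ℝ) ≠ 0) hfm.symm
    have hnl : (n:ℝ)/ℓ = 1/h := by
      rw [hdef]
      field_simp
    have hpow : h^n = h^j * h^(n-j) := by rw [← pow_add, Nat.add_sub_cancel' hjn]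
    rw [hBdef, hidx, hnl, hpow, ← hfm]
    have h1 : (h:ℝ) ≠ 0 := ne_of_gt hh
    have h2 : (((n-j).factorial : ℕ) : ℝ) ≠ 0 := by positivity
    field_simp
    ring_nf
    rw [← mul_pow, mul_inv_cancel₀ h1, one_pow]
  constructor
  · rw [hsupL, hsupM, hprod]
  · intro hl2
    rw [hsupL, hsupM, hprod, hl2]
    have hsum : ∑ k ∈ range (n+1), (1/(k.factorial:ℝ)) * ((n:ℝ)/2)^k
        ≤ Real.exp ((n:ℝ)/2) := by
      refine le_trans (le_of_eq ?_) (Real.sum_le_exp_of_nonneg (by positivity) (n+1))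
      apply Finset.sum_congr rfl
      intro k _
      rw [one_div]
      ring
    calc 2^n * ∑ k ∈ range (n+1), (1/(k.factorial:ℝ)) * ((n:ℝ)/2)^k
        ≤ 2^n * Real.exp ((n:ℝ)/2) := by
          exact mul_le_mul_of_nonneg_left hsum (by positivity)
      _ = (2 * Real.sqrt (Real.exp 1))^n := by
          rw [mul_pow, ← Real.exp_half, ← Real.exp_nat_mul]
          ring_nf
end

section
/- If ℓ ≤ 1 (ℓ > 0), then lim_{n→∞} κ_∞(L)^{1/n} = 2e/ℓ, where κ_∞(L) = 2^n·∑_{k=0}^n (1/k!)·(n/ℓ)^k. -/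
open Real Filter

lemma one_add_le_exp' (n : ℕ) (hn : 1 ≤ n) : ((n:ℝ)+1)^n ≤ (n:ℝ)^n * Real.exp 1 := by
  have hn0 : (0:ℝ) < n := by exact_mod_cast hn
  have h1 : ((n:ℝ)+1) ≤ n * Real.exp (1/n) := by
    have := Real.add_one_le_exp (1/(n:ℝ))
    have h2 : (n:ℝ) * (1/n + 1) ≤ n * Real.exp (1/n) := by
      exact mul_le_mul_of_nonneg_left this hn0.le
    calc ((n:ℝ)+1) = n * (1/n + 1) := by field_simp; ring
    _ ≤ _ := h2
  calc ((n:ℝ)+1)^n ≤ ((n:ℝ) * Real.exp (1/n))^n := by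
        apply pow_le_pow_left₀ (by positivity) h1
  _ = (n:ℝ)^n * Real.exp (1/n)^n := mul_pow _ _ _
  _ = (n:ℝ)^n * Real.exp 1 := by
        rw [← Real.exp_nat_mul]
        congr 1
        field_simp

lemma fact_ge (n : ℕ) : (n:ℝ)^n ≤ n.factorial * Real.exp 1 ^ n := by
  induction n with
  | zero => simp
  | succ n ih =>
    rcases Nat.eq_zero_or_pos n with h | h
    · subst h
      simp
    · have h1 : ((n:ℝ)+1)^n ≤ (n:ℝ)^n * Real.exp 1 := one_add_le_exp' n h
      have he : (0:ℝ) < Real.exp 1 := Real.exp_pos 1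
      have hn1 : (0:ℝ) ≤ (n:ℝ)+1 := by positivity
      push_cast [Nat.factorial_succ]
      calc ((n:ℝ)+1)^(n+1) = ((n:ℝ)+1) * ((n:ℝ)+1)^n := by ring
      _ ≤ ((n:ℝ)+1) * ((n:ℝ)^n * Real.exp 1) := by
            apply mul_le_mul_of_nonneg_left h1 hn1
      _ ≤ ((n:ℝ)+1) * ((n.factorial * Real.exp 1 ^ n) * Real.exp 1) := by
            apply mul_le_mul_of_nonneg_left _ hn1
            apply mul_le_mul_of_nonneg_right ih he.le
      _ = ((n:ℝ)+1) * n.factorial * Real.exp 1 ^ (n+1) := by ring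

lemma exp_mul_pow_le (n : ℕ) (hn : 1 ≤ n) :
    Real.exp 1 * (n:ℝ)^(n+1) ≤ ((n:ℝ)+1)^(n+1) := by
  have hn0 : (0:ℝ) < n := by exact_mod_cast hn
  have hx : (0:ℝ) < 1/((n:ℝ)+1) := by positivity
  have hx1 : 1 - 1/((n:ℝ)+1) = (n:ℝ)/((n:ℝ)+1) := by field_simp; ring
  have h1 : Real.exp (1/((n:ℝ)+1)) ≤ ((n:ℝ)+1)/n := by
    have h2 := Real.add_one_le_exp (-(1/((n:ℝ)+1)))
    have h3 : (0:ℝ) < (n:ℝ)/((n:ℝ)+1) := by positivity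
    rw [Real.exp_neg] at h2
    have h4 : (n:ℝ)/((n:ℝ)+1) ≤ (Real.exp (1/((n:ℝ)+1)))⁻¹ := by
      rw [← hx1]; linarith
    have h5 := (le_inv_comm₀ h3 (Real.exp_pos _)).mp h4
    calc Real.exp (1/((n:ℝ)+1)) ≤ ((n:ℝ)/((n:ℝ)+1))⁻¹ := h5
    _ = ((n:ℝ)+1)/n := by rw [inv_div]
  have h6 : Real.exp (1/((n:ℝ)+1)) * n ≤ (n:ℝ)+1 := by
    rw [div_eq_mul_inv] at h1
    calc Real.exp (1/((n:ℝ)+1)) * n ≤ (((n:ℝ)+1) * (n:ℝ)⁻¹) * n := by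
          apply mul_le_mul_of_nonneg_right h1 hn0.le
    _ = (n:ℝ)+1 := by field_simp
  calc Real.exp 1 * (n:ℝ)^(n+1)
      = (Real.exp (1/((n:ℝ)+1)) * n)^(n+1) := by
        rw [mul_pow, ← Real.exp_nat_mul]
        congr 2
        push_cast; field_simp
  _ ≤ ((n:ℝ)+1)^(n+1) := by
        apply pow_le_pow_left₀ (by positivity) h6

lemma fact_le (n : ℕ) (hn : 1 ≤ n) :
    (n.factorial : ℝ) * Real.exp 1 ^ n ≤ Real.exp 1 * (n:ℝ)^(n+1) := by
  induction n with
  | zero => omega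
  | succ n ih =>
    rcases Nat.eq_zero_or_pos n with h | h
    · subst h; simp [Nat.factorial]
    · have ih := ih h
      have he : (0:ℝ) < Real.exp 1 := Real.exp_pos 1
      have key := exp_mul_pow_le n h
      push_cast [Nat.factorial_succ]
      calc ((n:ℝ)+1) * n.factorial * Real.exp 1 ^ (n+1)
          = ((n:ℝ)+1) * Real.exp 1 * ((n.factorial:ℝ) * Real.exp 1 ^ n) := by ring
      _ ≤ ((n:ℝ)+1) * Real.exp 1 * (Real.exp 1 * (n:ℝ)^(n+1)) := by
            apply mul_le_mul_of_nonneg_left ih (by positivity)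
      _ = ((n:ℝ)+1) * (Real.exp 1 * ((n:ℝ)^(n+1) * Real.exp 1)) := by ring
      _ ≤ ((n:ℝ)+1) * (Real.exp 1 * (((n:ℝ)+1)^(n+1))) := by
            apply mul_le_mul_of_nonneg_left _ (by positivity)
            apply mul_le_mul_of_nonneg_left _ he.le
            calc (n:ℝ)^(n+1) * Real.exp 1 = Real.exp 1 * (n:ℝ)^(n+1) := by ring
            _ ≤ _ := key
      _ = Real.exp 1 * ((n:ℝ)+1)^(n+1+1) := by ring

lemma fact_ratio (k d : ℕ) : ((k+d).factorial : ℕ) ≤ k.factorial * (k+d) ^ d := by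
  induction d with
  | zero => simp
  | succ d ih =>
    have h1 : (k+d).factorial ≤ k.factorial * (k+d)^d := ih
    calc (k+(d+1)).factorial = (k+d+1) * (k+d).factorial := by
          rw [show k+(d+1) = (k+d)+1 by omega, Nat.factorial_succ]
    _ ≤ (k+d+1) * (k.factorial * (k+d)^d) := Nat.mul_le_mul_left _ ih
    _ ≤ (k+d+1) * (k.factorial * (k+d+1)^d) := by
          apply Nat.mul_le_mul_left
          apply Nat.mul_le_mul_left
          exact Nat.pow_le_pow_left (by omega) d
    _ = k.factorial * (k+(d+1))^(d+1) := by rw [show k+(d+1) = k+d+1 from by omega]; ring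

lemma term_le (n k : ℕ) (hk : k ≤ n) (x : ℝ) (hx : (n:ℝ) ≤ x) (hx0 : 0 < x) :
    x^k / k.factorial ≤ x^n / n.factorial := by
  have h1 := fact_ratio k (n - k)
  rw [show k + (n-k) = n from by omega] at h1
  have h2 : (n.factorial : ℝ) ≤ k.factorial * (n:ℝ)^(n-k) := by exact_mod_cast h1
  have h3 : (n:ℝ)^(n-k) ≤ x^(n-k) := pow_le_pow_left₀ (by positivity) hx _
  have hk0 : (0:ℝ) < k.factorial := by exact_mod_cast k.factorial_pos
  have hn0 : (0:ℝ) < n.factorial := by exact_mod_cast n.factorial_pos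
  rw [div_le_div_iff₀ hk0 hn0]
  calc x^k * n.factorial ≤ x^k * (k.factorial * (n:ℝ)^(n-k)) := by
        apply mul_le_mul_of_nonneg_left h2 (by positivity)
  _ ≤ x^k * (k.factorial * x^(n-k)) := by
        apply mul_le_mul_of_nonneg_left _ (by positivity)
        exact mul_le_mul_of_nonneg_left h3 hk0.le
  _ = x^n * k.factorial := by
        rw [show x^k * ((k.factorial:ℝ) * x^(n-k)) = (x^k * x^(n-k)) * k.factorial from by ring,
          ← pow_add, show k + (n-k) = n from by omega]

lemma sum_ge (n : ℕ) (x : ℝ) (hx0 : 0 ≤ x) :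
    x^n / n.factorial ≤ ∑ k ∈ Finset.range (n + 1), (1 / (k.factorial : ℝ)) * x ^ k := by
  have := Finset.single_le_sum (f := fun k => (1 / (k.factorial : ℝ)) * x ^ k)
    (fun i _ => by positivity) (Finset.self_mem_range_succ n)
  calc x^n / n.factorial = (1 / (n.factorial : ℝ)) * x ^ n := by rw [one_div, inv_mul_eq_div]
  _ ≤ _ := this

lemma sum_le (n : ℕ) (x : ℝ) (hx : (n:ℝ) ≤ x) (hx0 : 0 < x) :
    ∑ k ∈ Finset.range (n + 1), (1 / (k.factorial : ℝ)) * x ^ k ≤ (n+1) * (x^n / n.factorial) := by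
  calc ∑ k ∈ Finset.range (n + 1), (1 / (k.factorial : ℝ)) * x ^ k
      ≤ ∑ _k ∈ Finset.range (n + 1), x^n / n.factorial := by
        apply Finset.sum_le_sum
        intro k hk
        rw [one_div, inv_mul_eq_div]
        exact term_le n k (by simpa [Nat.lt_succ_iff] using hk) x hx hx0
  _ = (n+1) * (x^n / n.factorial) := by
        rw [Finset.sum_const, Finset.card_range, nsmul_eq_mul]
        push_cast; ring

lemma sum_pos (n : ℕ) (x : ℝ) (hx0 : 0 ≤ x) :
    0 < ∑ k ∈ Finset.range (n + 1), (1 / (k.factorial : ℝ)) * x ^ k := by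
  have h1 : (1:ℝ) ≤ ∑ k ∈ Finset.range (n + 1), (1 / (k.factorial : ℝ)) * x ^ k := by
    have := Finset.single_le_sum (f := fun k => (1 / (k.factorial : ℝ)) * x ^ k)
      (fun i _ => by positivity) (Finset.mem_range.mpr (Nat.succ_pos n))
    simpa using this
  linarith

theorem kappa_root_tendsto_small_length (ℓ : ℝ) (hpos : 0 < ℓ) (hℓ : ℓ ≤ 1) :
    Tendsto
      (fun n : ℕ =>
        (2 ^ n * ∑ k ∈ Finset.range (n + 1), (1 / (k.factorial : ℝ)) * (n / ℓ) ^ k)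
          ^ ((1 : ℝ) / n))
      atTop (nhds (2 * Real.exp 1 / ℓ)) := by
  set T : ℝ := Real.log 2 + 1 - Real.log ℓ with hT
  -- basic limits
  have l1 : Tendsto (fun n : ℕ => 1/(n:ℝ)) atTop (nhds 0) := tendsto_one_div_atTop_nhds_zero_nat
  have l2 : Tendsto (fun n : ℕ => Real.log n / (n:ℝ)) atTop (nhds 0) :=
    (Real.isLittleO_log_id_atTop.tendsto_div_nhds_zero).comp tendsto_natCast_atTop_atTop
  have hc : Tendsto (fun n : ℕ => (1 + Real.log n)/(n:ℝ)) atTop (nhds 0) := by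
    have := l1.add l2
    simpa [add_div] using this
  have hlo : Tendsto (fun n : ℕ => T - (1 + Real.log n)/(n:ℝ)) atTop (nhds T) := by
    simpa using (tendsto_const_nhds (x := T) (f := atTop)).sub hc
  have hlog1 : Tendsto (fun n : ℕ => Real.log ((n:ℝ)+1) / (n:ℝ)) atTop (nhds 0) := by
    apply tendsto_of_tendsto_of_tendsto_of_le_of_le' tendsto_const_nhds hc
    · filter_upwards [eventually_ge_atTop 1] with n hn
      have hn0 : (0:ℝ) < n := by exact_mod_cast hn
      have : (0:ℝ) ≤ Real.log ((n:ℝ)+1) := Real.log_nonneg (by linarith)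
      positivity
    · filter_upwards [eventually_ge_atTop 1] with n hn
      have hn0 : (0:ℝ) < n := by exact_mod_cast hn
      have h1 : ((n:ℝ)+1) ≤ 2*n := by linarith [hn0, show (1:ℝ) ≤ n from by exact_mod_cast hn]
      have h2 : Real.log ((n:ℝ)+1) ≤ Real.log 2 + Real.log n := by
        calc Real.log ((n:ℝ)+1) ≤ Real.log (2*n) := Real.log_le_log (by positivity) h1
        _ = Real.log 2 + Real.log n := Real.log_mul two_ne_zero hn0.ne'
      have h3 : Real.log 2 ≤ 1 := by
        have := Real.log_le_sub_one_of_pos (x := 2) (by norm_num)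
        linarith
      rw [div_le_div_iff_of_pos_right hn0]
      linarith
  have hhi : Tendsto (fun n : ℕ => T + Real.log ((n:ℝ)+1)/(n:ℝ)) atTop (nhds T) := by
    simpa using (tendsto_const_nhds (x := T) (f := atTop)).add hlog1
  -- the log sequence
  have hb : Tendsto
      (fun n : ℕ =>
        Real.log (2 ^ n * ∑ k ∈ Finset.range (n + 1), (1 / (k.factorial : ℝ)) * ((n:ℝ) / ℓ) ^ k)
          * ((1:ℝ)/n)) atTop (nhds T) := by
    apply tendsto_of_tendsto_of_tendsto_of_le_of_le' hlo hhi
    · filter_upwards [eventually_ge_atTop 1] with n hn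
      have hn1 : (1:ℝ) ≤ n := by exact_mod_cast hn
      have hn0 : (0:ℝ) < n := by linarith
      set x : ℝ := (n:ℝ)/ℓ with hxdef
      have hx0 : 0 < x := by positivity
      have hxn : (n:ℝ) ≤ x := by
        calc (n:ℝ) = (n:ℝ)/1 := (div_one _).symm
        _ ≤ (n:ℝ)/ℓ := div_le_div_of_nonneg_left hn0.le hpos hℓ
      set S : ℝ := ∑ k ∈ Finset.range (n + 1), (1 / (k.factorial : ℝ)) * x ^ k with hSdef
      have hS0 : 0 < S := sum_pos n x hx0.le
      have hSge : x^n / n.factorial ≤ S := sum_ge n x hx0.le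
      have hf0 : (0:ℝ) < n.factorial := by exact_mod_cast n.factorial_pos
      have hlogS : (n:ℝ) * Real.log x - Real.log n.factorial ≤ Real.log S := by
        calc (n:ℝ) * Real.log x - Real.log n.factorial = Real.log (x^n / n.factorial) := by
              rw [Real.log_div (by positivity) hf0.ne', Real.log_pow]
        _ ≤ Real.log S := Real.log_le_log (by positivity) hSge
      have hx_eq : Real.log x = Real.log n - Real.log ℓ := Real.log_div hn0.ne' hpos.ne'
      have h2 : Real.log n.factorial + n ≤ 1 + ((n:ℝ)+1) * Real.log n := by
        have := fact_le n hn
        have hl := Real.log_le_log (by positivity) this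
        rw [Real.log_mul hf0.ne' (by positivity), Real.log_pow, Real.log_exp,
          Real.log_mul (Real.exp_pos 1).ne' (by positivity), Real.log_exp, Real.log_pow] at hl
        push_cast at hl ⊢
        linarith
      have hble : Real.log (2 ^ n * S) = n * Real.log 2 + Real.log S := by
        rw [Real.log_mul (by positivity) hS0.ne', Real.log_pow]
      rw [hx_eq, mul_sub] at hlogS
      have key : (n:ℝ) * T - (1 + Real.log n) ≤ n * Real.log 2 + Real.log S := by
        rw [hT]
        nlinarith [hlogS, h2]
      rw [hble, mul_one_div, le_div_iff₀ hn0]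
      have hcan : ((1:ℝ) + Real.log n)/n * n = 1 + Real.log n := div_mul_cancel₀ _ hn0.ne'
      nlinarith [key, hcan]
    · filter_upwards [eventually_ge_atTop 1] with n hn
      have hn1 : (1:ℝ) ≤ n := by exact_mod_cast hn
      have hn0 : (0:ℝ) < n := by linarith
      set x : ℝ := (n:ℝ)/ℓ with hxdef
      have hx0 : 0 < x := by positivity
      have hxn : (n:ℝ) ≤ x := by
        calc (n:ℝ) = (n:ℝ)/1 := (div_one _).symm
        _ ≤ (n:ℝ)/ℓ := div_le_div_of_nonneg_left hn0.le hpos hℓ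
      set S : ℝ := ∑ k ∈ Finset.range (n + 1), (1 / (k.factorial : ℝ)) * x ^ k with hSdef
      have hS0 : 0 < S := sum_pos n x hx0.le
      have hSle : S ≤ (n+1) * (x^n / n.factorial) := sum_le n x hxn hx0
      have hf0 : (0:ℝ) < n.factorial := by exact_mod_cast n.factorial_pos
      have hlogS : Real.log S ≤ Real.log ((n:ℝ)+1) + ((n:ℝ) * Real.log x - Real.log n.factorial) := by
        calc Real.log S ≤ Real.log (((n:ℝ)+1) * (x^n / n.factorial)) :=
              Real.log_le_log hS0 (by push_cast at hSle ⊢; linarith)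
        _ = Real.log ((n:ℝ)+1) + ((n:ℝ) * Real.log x - Real.log n.factorial) := by
              rw [Real.log_mul (by positivity) (by positivity),
                Real.log_div (by positivity) hf0.ne', Real.log_pow]
      have hx_eq : Real.log x = Real.log n - Real.log ℓ := Real.log_div hn0.ne' hpos.ne'
      have h1 : (n:ℝ) * Real.log n ≤ Real.log n.factorial + n := by
        have := fact_ge n
        have hl := Real.log_le_log (by positivity) this
        rw [Real.log_mul hf0.ne' (by positivity), Real.log_pow, Real.log_pow, Real.log_exp] at hl
        push_cast at hl ⊢
        linarith
      have hble : Real.log (2 ^ n * S) = n * Real.log 2 + Real.log S := by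
        rw [Real.log_mul (by positivity) hS0.ne', Real.log_pow]
      rw [hx_eq, mul_sub] at hlogS
      have key : (n:ℝ) * Real.log 2 + Real.log S ≤ n * T + Real.log ((n:ℝ)+1) := by
        rw [hT]
        nlinarith [hlogS, h1]
      rw [hble, mul_one_div, div_le_iff₀ hn0]
      have hcan : Real.log ((n:ℝ)+1)/n * n = Real.log ((n:ℝ)+1) := div_mul_cancel₀ _ hn0.ne'
      nlinarith [key, hcan]
  -- conclude
  have hexp : Tendsto (fun n : ℕ =>
      Real.exp (Real.log (2 ^ n * ∑ k ∈ Finset.range (n + 1), (1 / (k.factorial : ℝ)) * ((n:ℝ) / ℓ) ^ k)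
        * ((1:ℝ)/n))) atTop (nhds (Real.exp T)) := (Real.continuous_exp.tendsto T).comp hb
  have hexpT : Real.exp T = 2 * Real.exp 1 / ℓ := by
    rw [hT, Real.exp_sub, Real.exp_add, Real.exp_log (by norm_num : (0:ℝ) < 2), Real.exp_log hpos]
  rw [← hexpT]
  apply hexp.congr'
  filter_upwards [eventually_ge_atTop 1] with n hn
  have hn0 : (0:ℝ) < n := by exact_mod_cast hn
  have hS0 : 0 < ∑ k ∈ Finset.range (n + 1), (1 / (k.factorial : ℝ)) * ((n:ℝ) / ℓ) ^ k :=
    sum_pos n _ (by positivity)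
  rw [Real.rpow_def_of_pos (by positivity)]
end

section
/- If 1 < ℓ ≤ 2, then lim_{n→∞} (2^n·∑_{k=0}^n (1/k!)·(n/ℓ)^k)^{1/n} = 2·e^{1/ℓ}. -/
open Real Filter

/-- `exp` as a tsum. -/
private lemma exp_eq_tsum' (x : ℝ) : Real.exp x = ∑' n : ℕ, x ^ n / n.factorial := by
  rw [Real.exp_eq_exp_ℝ, NormedSpace.exp_eq_tsum_div]

set_option maxHeartbeats 1000000 in
private lemma exp_tail_bound {ℓ : ℝ} (h1 : 1 < ℓ) (n : ℕ) :
    Real.exp ((n : ℝ) / ℓ) ≤ (∑ k ∈ Finset.range (n + 1), ((n : ℝ) / ℓ) ^ k / k.factorial)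
      + ((n : ℝ) / ℓ) ^ (n + 1) / (n + 1).factorial * (ℓ / (ℓ - 1)) := by
  have hℓ0 : (0 : ℝ) < ℓ := lt_trans one_pos h1
  set x : ℝ := (n : ℝ) / ℓ with hxdef
  have hx0 : 0 ≤ x := by positivity
  have hsum : Summable (fun k : ℕ => x ^ k / k.factorial) :=
    Real.summable_pow_div_factorial x
  have hsplit := Summable.sum_add_tsum_nat_add (f := fun k : ℕ => x ^ k / k.factorial) (n + 1) hsum
  have hq0 : (0 : ℝ) ≤ 1 / ℓ := by positivity
  have hq1 : 1 / ℓ < 1 := by rw [div_lt_one hℓ0]; exact h1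
  have hterm : ∀ j : ℕ, x ^ (j + (n + 1)) / ((j + (n + 1)).factorial : ℝ) ≤
      (x ^ (n + 1) / (n + 1).factorial) * (1 / ℓ) ^ j := by
    intro j
    have hfac' : (((n + 1).factorial : ℝ)) * ((n + 1 : ℝ)) ^ j ≤ ((j + (n + 1)).factorial : ℝ) := by
      have h0 : ((n + 1).factorial : ℕ) * ((n + 1) + 1) ^ j ≤ ((n + 1) + j).factorial :=
        Nat.factorial_mul_pow_le_factorial
      have h0' : (((n + 1).factorial : ℝ)) * ((n + 2 : ℝ)) ^ j ≤ (((n + 1) + j).factorial : ℝ) := by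
        exact_mod_cast h0
      have h2 : (((n + 1).factorial : ℝ)) * ((n + 1 : ℝ)) ^ j ≤
          (((n + 1).factorial : ℝ)) * ((n + 2 : ℝ)) ^ j :=
        mul_le_mul_of_nonneg_left (pow_le_pow_left₀ (by positivity) (by linarith) j)
          (by positivity)
      rw [add_comm j (n + 1)]
      linarith
    have hxle : x ≤ ((n : ℝ) + 1) / ℓ := by
      rw [hxdef]; gcongr; linarith
    have hxj : x ^ j ≤ (((n : ℝ) + 1) / ℓ) ^ j := pow_le_pow_left₀ hx0 hxle j
    have hkey : x ^ j * (((n + 1).factorial : ℝ)) ≤ (1 / ℓ) ^ j * ((j + (n + 1)).factorial : ℝ) := by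
      have hsplitpow : (((n : ℝ) + 1) / ℓ) ^ j = (1 / ℓ) ^ j * ((n : ℝ) + 1) ^ j := by
        rw [div_pow, div_pow]; ring
      calc x ^ j * (((n + 1).factorial : ℝ))
          ≤ (((n : ℝ) + 1) / ℓ) ^ j * (((n + 1).factorial : ℝ)) := by
            gcongr
        _ = (1 / ℓ) ^ j * ((((n + 1).factorial : ℝ)) * ((n : ℝ) + 1) ^ j) := by
            rw [hsplitpow]; ring
        _ ≤ (1 / ℓ) ^ j * ((j + (n + 1)).factorial : ℝ) :=
            mul_le_mul_of_nonneg_left hfac' (by positivity)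
    have hnum : x ^ (j + (n + 1)) = x ^ (n + 1) * x ^ j := by rw [← pow_add]; ring_nf
    have hrhs : (x ^ (n + 1) / ((n + 1).factorial : ℝ)) * (1 / ℓ) ^ j
        = (x ^ (n + 1) * (1 / ℓ) ^ j) / ((n + 1).factorial : ℝ) := by ring
    rw [hnum, hrhs, div_le_div_iff₀ (by positivity) (by positivity)]
    calc x ^ (n + 1) * x ^ j * (((n + 1).factorial : ℝ))
        = x ^ (n + 1) * (x ^ j * (((n + 1).factorial : ℝ))) := by ring
      _ ≤ x ^ (n + 1) * ((1 / ℓ) ^ j * ((j + (n + 1)).factorial : ℝ)) := by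
          apply mul_le_mul_of_nonneg_left hkey (by positivity)
      _ = x ^ (n + 1) * (1 / ℓ) ^ j * ((j + (n + 1)).factorial : ℝ) := by ring
  have hgeo : Summable (fun j : ℕ => (x ^ (n + 1) / ((n + 1).factorial : ℝ)) * (1 / ℓ) ^ j) :=
    (summable_geometric_of_lt_one hq0 hq1).mul_left _
  have htail_summable : Summable (fun j : ℕ => x ^ (j + (n + 1)) / ((j + (n + 1)).factorial : ℝ)) :=
    (summable_nat_add_iff (n + 1)).2 hsum
  have hbound : (∑' j : ℕ, x ^ (j + (n + 1)) / ((j + (n + 1)).factorial : ℝ))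
      ≤ x ^ (n + 1) / ((n + 1).factorial : ℝ) * (ℓ / (ℓ - 1)) := by
    calc (∑' j : ℕ, x ^ (j + (n + 1)) / ((j + (n + 1)).factorial : ℝ))
        ≤ ∑' j : ℕ, (x ^ (n + 1) / ((n + 1).factorial : ℝ)) * (1 / ℓ) ^ j :=
          Summable.tsum_le_tsum hterm htail_summable hgeo
      _ = (x ^ (n + 1) / ((n + 1).factorial : ℝ)) * (1 - 1 / ℓ)⁻¹ := by
          rw [tsum_mul_left, tsum_geometric_of_lt_one hq0 hq1]
      _ = x ^ (n + 1) / ((n + 1).factorial : ℝ) * (ℓ / (ℓ - 1)) := by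
          congr 1
          have hone : (1 : ℝ) - 1 / ℓ = (ℓ - 1) / ℓ := by
            field_simp
          rw [hone, inv_div]
  rw [exp_eq_tsum', ← hsplit]
  linarith

theorem kappa_root_tendsto_mid_length (ℓ : ℝ) (h1 : 1 < ℓ) (h2 : ℓ ≤ 2) :
    Tendsto
      (fun n : ℕ =>
        (2 ^ n * ∑ k ∈ Finset.range (n + 1), (1 / (k.factorial : ℝ)) * (n / ℓ) ^ k)
          ^ ((1 : ℝ) / n))
      atTop (nhds (2 * Real.exp (1 / ℓ))) := by
  have hℓ0 : (0 : ℝ) < ℓ := lt_trans one_pos h1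
  set c : ℝ := 2 * Real.exp (1 / ℓ) with hc
  have hc0 : 0 < c := by positivity
  -- the partial sum, with terms rewritten as `x^k / k!`
  have hSrw : ∀ n : ℕ, (∑ k ∈ Finset.range (n + 1), (1 / (k.factorial : ℝ)) * ((n : ℝ) / ℓ) ^ k)
      = ∑ k ∈ Finset.range (n + 1), ((n : ℝ) / ℓ) ^ k / k.factorial := by
    intro n
    apply Finset.sum_congr rfl
    intro k _
    rw [one_div_mul_eq_div]
  set S : ℕ → ℝ := fun n => ∑ k ∈ Finset.range (n + 1), ((n : ℝ) / ℓ) ^ k / k.factorial with hS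
  have hS0 : ∀ n, 0 ≤ S n := by
    intro n
    apply Finset.sum_nonneg
    intro k _
    positivity
  -- upper bound : S n ≤ exp (n/ℓ)
  have hupper : ∀ n : ℕ, S n ≤ Real.exp ((n : ℝ) / ℓ) := by
    intro n
    exact Real.sum_le_exp_of_nonneg (by positivity) (n + 1)
  -- the error sequence
  set ε : ℕ → ℝ := fun n => (Real.exp 1 / ℓ) ^ (n + 1) * (ℓ / (ℓ - 1)) / Real.exp ((n : ℝ) / ℓ)
    with hε
  have hε0 : ∀ n, 0 ≤ ε n := by
    intro n
    have : (0 : ℝ) < ℓ - 1 := by linarith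
    positivity
  -- lower bound : exp (n/ℓ) * (1 - ε n) ≤ S n
  have hlower : ∀ n : ℕ, Real.exp ((n : ℝ) / ℓ) * (1 - ε n) ≤ S n := by
    intro n
    have htail := exp_tail_bound h1 n
    have hfacterm : ((n : ℝ) / ℓ) ^ (n + 1) / (n + 1).factorial ≤ (Real.exp 1 / ℓ) ^ (n + 1) := by
      have h1fac : (((n : ℝ) + 1)) ^ (n + 1) / (n + 1).factorial ≤ Real.exp 1 ^ (n + 1) := by
        have := Real.pow_div_factorial_le_exp (x := ((n : ℝ) + 1)) (by positivity) (n + 1)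
        calc (((n : ℝ) + 1)) ^ (n + 1) / (n + 1).factorial
            ≤ Real.exp ((n : ℝ) + 1) := by exact_mod_cast this
          _ = Real.exp 1 ^ (n + 1) := by
              rw [← Real.exp_nat_mul]
              congr 1
              push_cast
              ring
      have hfacinv : (1 : ℝ) / (n + 1).factorial ≤ (Real.exp 1 / ((n : ℝ) + 1)) ^ (n + 1) := by
        rw [div_pow, div_le_div_iff₀ (by positivity) (by positivity), one_mul]
        rw [div_le_iff₀ (by positivity)] at h1fac
        calc ((n : ℝ) + 1) ^ (n + 1) ≤ Real.exp 1 ^ (n + 1) * ((n + 1).factorial : ℝ) := h1fac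
          _ = Real.exp 1 ^ (n + 1) * ((n + 1).factorial : ℝ) := rfl
      calc ((n : ℝ) / ℓ) ^ (n + 1) / (n + 1).factorial
          = ((n : ℝ) / ℓ) ^ (n + 1) * ((1 : ℝ) / (n + 1).factorial) := by ring
        _ ≤ ((n : ℝ) / ℓ) ^ (n + 1) * ((Real.exp 1 / ((n : ℝ) + 1)) ^ (n + 1)) :=
            mul_le_mul_of_nonneg_left hfacinv (by positivity)
        _ = (((n : ℝ) / ((n : ℝ) + 1)) * (Real.exp 1 / ℓ)) ^ (n + 1) := by
            rw [mul_pow, div_pow, div_pow, div_pow, div_pow]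
            ring
        _ ≤ (1 * (Real.exp 1 / ℓ)) ^ (n + 1) := by
            apply pow_le_pow_left₀ (by positivity)
            apply mul_le_mul_of_nonneg_right _ (by positivity)
            rw [div_le_one (by positivity)]; linarith
        _ = (Real.exp 1 / ℓ) ^ (n + 1) := by rw [one_mul]
    have key : Real.exp ((n : ℝ) / ℓ) ≤ S n + ε n * Real.exp ((n : ℝ) / ℓ) := by
      have h3 : ((n : ℝ) / ℓ) ^ (n + 1) / (n + 1).factorial * (ℓ / (ℓ - 1)) ≤
          (Real.exp 1 / ℓ) ^ (n + 1) * (ℓ / (ℓ - 1)) :=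
        mul_le_mul_of_nonneg_right hfacterm (div_nonneg hℓ0.le (by linarith))
      have h4 : ε n * Real.exp ((n : ℝ) / ℓ) = (Real.exp 1 / ℓ) ^ (n + 1) * (ℓ / (ℓ - 1)) := by
        show (Real.exp 1 / ℓ) ^ (n + 1) * (ℓ / (ℓ - 1)) / Real.exp ((n : ℝ) / ℓ)
            * Real.exp ((n : ℝ) / ℓ) = _
        rw [div_mul_cancel₀]
        exact Real.exp_ne_zero _
      calc Real.exp ((n : ℝ) / ℓ)
          ≤ S n + ((n : ℝ) / ℓ) ^ (n + 1) / (n + 1).factorial * (ℓ / (ℓ - 1)) := htail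
        _ ≤ S n + (Real.exp 1 / ℓ) ^ (n + 1) * (ℓ / (ℓ - 1)) := by linarith
        _ = S n + ε n * Real.exp ((n : ℝ) / ℓ) := by rw [h4]
    nlinarith [Real.exp_pos ((n : ℝ) / ℓ)]
  -- ε tends to 0
  have hεtendsto : Tendsto ε atTop (nhds 0) := by
    have hr0 : (0 : ℝ) ≤ Real.exp 1 / ℓ / Real.exp (1 / ℓ) := by positivity
    have hr1 : Real.exp 1 / ℓ / Real.exp (1 / ℓ) < 1 := by
      rw [div_lt_one (Real.exp_pos _)]
      have h := Real.add_one_lt_exp (x := 1 / ℓ - 1) (by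
        intro h
        have : ℓ = 1 := by
          field_simp at h
          linarith
        linarith)
      rw [Real.exp_sub] at h
      have h' : 1 / ℓ < Real.exp (1 / ℓ) / Real.exp 1 := by linarith
      rw [lt_div_iff₀ (Real.exp_pos 1)] at h'
      calc Real.exp 1 / ℓ = 1 / ℓ * Real.exp 1 := by ring
        _ < Real.exp (1 / ℓ) := h'
    have heq : ∀ n : ℕ, ε n = (Real.exp 1 / ℓ * (ℓ / (ℓ - 1))) *
        (Real.exp 1 / ℓ / Real.exp (1 / ℓ)) ^ n := by
      intro n
      show (Real.exp 1 / ℓ) ^ (n + 1) * (ℓ / (ℓ - 1)) / Real.exp ((n : ℝ) / ℓ) = _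
      have hexp : Real.exp ((n : ℝ) / ℓ) = Real.exp (1 / ℓ) ^ n := by
        rw [← Real.exp_nat_mul]
        congr 1
        ring
      rw [hexp]
      calc (Real.exp 1 / ℓ) ^ (n + 1) * (ℓ / (ℓ - 1)) / Real.exp (1 / ℓ) ^ n
          = (Real.exp 1 / ℓ * (ℓ / (ℓ - 1))) * ((Real.exp 1 / ℓ) ^ n / Real.exp (1 / ℓ) ^ n) := by
            rw [pow_succ]; ring
        _ = (Real.exp 1 / ℓ * (ℓ / (ℓ - 1))) * (Real.exp 1 / ℓ / Real.exp (1 / ℓ)) ^ n := by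
            simp [div_pow]
    rw [show (0 : ℝ) = (Real.exp 1 / ℓ * (ℓ / (ℓ - 1))) * 0 by ring]
    apply Tendsto.congr (fun n => (heq n).symm)
    exact (tendsto_pow_atTop_nhds_zero_of_lt_one hr0 hr1).const_mul _
  -- the function we study
  have hrw : (fun n : ℕ =>
        ((2 : ℝ) ^ n * ∑ k ∈ Finset.range (n + 1), (1 / (k.factorial : ℝ)) * ((n : ℝ) / ℓ) ^ k)
          ^ ((1 : ℝ) / n)) = fun n : ℕ => ((2 : ℝ) ^ n * S n) ^ ((1 : ℝ) / n) := by
    funext n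
    rw [hSrw n]
  rw [hrw]
  -- squeeze
  have hcn : ∀ n : ℕ, n ≠ 0 → ((c ^ n : ℝ)) ^ ((1 : ℝ) / n) = c := by
    intro n hn
    rw [← Real.rpow_natCast c n, ← Real.rpow_mul hc0.le]
    rw [mul_one_div, div_self (by exact_mod_cast hn), Real.rpow_one]
  have hub : ∀ᶠ n : ℕ in atTop, ((2 : ℝ) ^ n * S n) ^ ((1 : ℝ) / n) ≤ c := by
    filter_upwards [eventually_ge_atTop 1] with n hn
    have h2n : (2 : ℝ) ^ n * S n ≤ c ^ n := by
      rw [hc, mul_pow]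
      have hexp : Real.exp (1 / ℓ) ^ n = Real.exp ((n : ℝ) / ℓ) := by
        rw [← Real.exp_nat_mul]; congr 1; ring
      rw [hexp]
      exact mul_le_mul_of_nonneg_left (hupper n) (by positivity)
    calc ((2 : ℝ) ^ n * S n) ^ ((1 : ℝ) / n)
        ≤ ((c ^ n : ℝ)) ^ ((1 : ℝ) / n) := by
          apply Real.rpow_le_rpow (by positivity) h2n (by positivity)
      _ = c := hcn n (by omega)
  have hlb : ∀ᶠ n : ℕ in atTop, c * (1 - ε n) ≤ ((2 : ℝ) ^ n * S n) ^ ((1 : ℝ) / n) := by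
    have hev : ∀ᶠ n : ℕ in atTop, ε n < 1 :=
      hεtendsto.eventually (eventually_lt_nhds zero_lt_one)
    filter_upwards [hev, eventually_ge_atTop 1] with n hεn hn
    have h1ε : 0 < 1 - ε n := by linarith
    have h1ε' : 1 - ε n ≤ 1 := by linarith [hε0 n]
    have hlow : c ^ n * (1 - ε n) ≤ (2 : ℝ) ^ n * S n := by
      rw [hc, mul_pow]
      have hexp : Real.exp (1 / ℓ) ^ n = Real.exp ((n : ℝ) / ℓ) := by
        rw [← Real.exp_nat_mul]; congr 1; ring
      rw [hexp, mul_assoc]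
      exact mul_le_mul_of_nonneg_left (hlower n) (by positivity)
    have hn0 : (0 : ℝ) < 1 / (n : ℝ) := by
      have : (0 : ℝ) < (n : ℝ) := by exact_mod_cast hn
      positivity
    have hn1 : (1 : ℝ) / (n : ℝ) ≤ 1 := by
      rw [div_le_one (by exact_mod_cast hn)]
      exact_mod_cast hn
    calc c * (1 - ε n)
        = c * ((1 - ε n) ^ (1 : ℝ)) := by rw [Real.rpow_one]
      _ ≤ c * ((1 - ε n) ^ ((1 : ℝ) / n)) :=
          mul_le_mul_of_nonneg_left (Real.rpow_le_rpow_of_exponent_ge h1ε h1ε' hn1) hc0.le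
      _ = ((c ^ n : ℝ)) ^ ((1 : ℝ) / n) * ((1 - ε n) ^ ((1 : ℝ) / n)) := by
          rw [hcn n (by omega)]
      _ = ((c ^ n : ℝ) * (1 - ε n)) ^ ((1 : ℝ) / n) := by
          rw [← Real.mul_rpow (by positivity) h1ε.le]
      _ ≤ ((2 : ℝ) ^ n * S n) ^ ((1 : ℝ) / n) := by
          apply Real.rpow_le_rpow (by positivity) hlow (by positivity)
  have hlbtendsto : Tendsto (fun n : ℕ => c * (1 - ε n)) atTop (nhds c) := by
    have : Tendsto (fun n : ℕ => 1 - ε n) atTop (nhds 1) := by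
      have := tendsto_const_nhds (x := (1 : ℝ)) (f := atTop (α := ℕ)) |>.sub hεtendsto
      simpa using this
    have h := this.const_mul c
    simpa using h
  exact tendsto_of_tendsto_of_tendsto_of_le_of_le' hlbtendsto tendsto_const_nhds hlb hub
end
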